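/- Let C_{m,k,j} be the set of compositions of m into j ordered parts (each part ≥ 0) with exactly k zero parts. With each composition identified with a Motzkin path (part λ ≥ 1 ↦ u^λ d^λ, part 0 ↦ h), for all m, k, j ≥ 0: ∑_{C ∈ C_{m,k,j}} ∏ t_i^{u_i(C)} ∏ s_i^{h_i(C)} = [P_k^{(j-k+1)}(1!s₁,2!s₂,…)/k!] · [(j-k)! B_{m,j-k}(1!t₁,2!t₂,…)/m!]. -/

import Mathlib

/-- Index set for the partial Bell polynomial `B_{m,r}`: sequences
`(r₁, …, r_m)` of nonnegative integers with `r₁+⋯+r_m = r` and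
`r₁+2r₂+⋯+m·r_m = m`. -/
def bellIndex (m r : ℕ) : Finset (Fin m → ℕ) :=
  (Fintype.piFinset fun _ => Finset.range (m+1)).filter
    fun c => (∑ i, c i) = r ∧ (∑ i, (i.1+1) * c i) = m

/-- The partial Bell polynomial `B_{m,r}(x₁,x₂,…)`, where `x i` is the `i`-th variable:
`B_{m,r} = ∑ m!/(r₁!⋯r_m!) ∏ (x_i/i!)^{r_i}`. -/
def partialBell (x : ℕ → ℚ) (m r : ℕ) : ℚ :=
  ∑ c ∈ bellIndex m r,
    ((m.factorial : ℚ) / ∏ i, ((c i).factorial : ℚ)) *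
      ∏ i, (x (i.1+1) / ((i.1+1).factorial : ℚ)) ^ c i

/-- The potential polynomial `P_n^{(λ)}(f₁,f₂,…)` (for a nonnegative integer
exponent `λ`), defined by `(1 + ∑_{n≥1} f_n x^n/n!)^λ = 1 + ∑_{n≥1} P_n^{(λ)} x^n/n!`. -/
noncomputable def potentialPoly (f : ℕ → ℚ) (lam n : ℕ) : ℚ :=
  (n.factorial : ℚ) * PowerSeries.coeff n
    ((PowerSeries.mk fun i => if i = 0 then 1 else f i / (i.factorial : ℚ)) ^ lam)

open scoped Classical in
/-- Compositions of `m` into `j` ordered nonnegative parts, exactly `k` of which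
are zero. -/
noncomputable def compSet (m k j : ℕ) : Finset (Fin j → ℕ) :=
  (Fintype.piFinset fun _ => Finset.range (m+1)).filter
    fun c => (∑ i, c i) = m ∧ (List.ofFn c).count 0 = k

/-- The maximal runs of consecutive zero parts of a composition. -/
def zeroRuns (c : List ℕ) : List (List ℕ) :=
  (c.splitBy (fun a b => (a == 0) == (b == 0))).filter (fun g => g.head? == some 0)

/-- `hRunCount c i` = number of maximal runs of exactly `i` consecutive zero parts;
under the identification of a composition with a Motzkin path (a part `λ ≥ 1`
becomes `u^λ d^λ` and a part `0` becomes `h`), this is the number of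
`h`-segments of length `i`. -/
def hRunCount (c : List ℕ) (i : ℕ) : ℕ :=
  ((zeroRuns c).filter (fun g => g.length == i)).length

namespace CWS
open List Finset PowerSeries

private theorem splitByLoop_eq_append {α : Type*} {r : α → α → Bool} {l : List α} {a : α} {g : List α}
    (gs : List (List α)) : List.splitBy.loop r l a g gs = gs.reverse ++ List.splitBy.loop r l a g [] := by
  induction l generalizing a g gs with
  | nil => simp [List.splitBy.loop]
  | cons b l ih =>
    simp_rw [List.splitBy.loop]
    cases r a b
    · rw [ih ((a :: g).reverse :: gs), ih [(a :: g).reverse]]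
      simp
    · exact ih gs

private theorem splitByLoop_congr {α : Type*} {r : α → α → Bool} {l : List α} {a : α} (g : List α) (x : α) :
    List.splitBy.loop r l a (g ++ [x]) [] = (List.splitBy.loop r l a g []).modifyHead (x :: ·) := by
  induction l generalizing a g with
  | nil => simp [List.splitBy.loop]
  | cons b l ih =>
    simp_rw [List.splitBy.loop]
    cases r a b
    · rw [splitByLoop_eq_append [(a :: (g ++ [x])).reverse],
        splitByLoop_eq_append [(a :: g).reverse]]
      simp
    · rw [show a :: (g ++ [x]) = (a :: g) ++ [x] by simp, ih]

theorem splitBy_cons_cons_of_rel {α : Type*} {r : α → α → Bool} {a b : α} (l : List α)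
    (h : r a b = true) :
    List.splitBy r (a :: b :: l) = (List.splitBy r (b :: l)).modifyHead (a :: ·) := by
  show List.splitBy.loop r (b :: l) a [] [] = _
  rw [List.splitBy.loop, h]
  show List.splitBy.loop r l b ([] ++ [a]) [] = _
  rw [splitByLoop_congr]
  rfl

theorem splitBy_cons_cons_of_not_rel {α : Type*} {r : α → α → Bool} {a b : α} (l : List α)
    (h : r a b = false) :
    List.splitBy r (a :: b :: l) = [a] :: List.splitBy r (b :: l) := by
  show List.splitBy.loop r (b :: l) a [] [] = _
  rw [List.splitBy.loop, h]
  show List.splitBy.loop r l b [] [[a]] = _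
  rw [splitByLoop_eq_append [[a]]]
  rfl

theorem splitBy_cons_head {α : Type*} (r : α → α → Bool) (b : α) (l : List α) :
    ∃ g gs, List.splitBy r (b :: l) = (b :: g) :: gs := by
  induction l generalizing b with
  | nil => exact ⟨[], [], rfl⟩
  | cons c l ih =>
    rcases ih c with ⟨g, gs, hg⟩
    cases hr : r b c with
    | true => exact ⟨c :: g, gs, by rw [splitBy_cons_cons_of_rel l hr, hg]; rfl⟩
    | false => exact ⟨[], (c :: g) :: gs, by rw [splitBy_cons_cons_of_not_rel l hr, hg]⟩

theorem zeroRuns_cons_of_ne (a : ℕ) (l : List ℕ) (ha : a ≠ 0) :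
    zeroRuns (a :: l) = zeroRuns l := by
  cases l with
  | nil =>
    simp [zeroRuns, List.splitBy, List.splitBy.loop, ha]
  | cons b l =>
    by_cases hb : b = 0
    · have : ((a == 0) == (b == 0)) = false := by subst hb; simp [ha]
      rw [zeroRuns, zeroRuns, splitBy_cons_cons_of_not_rel l this]
      simp [ha]
    · have : ((a == 0) == (b == 0)) = true := by simp [ha, hb]
      rcases splitBy_cons_head (fun a b => (a == 0) == (b == 0)) b l with ⟨g, gs, hg⟩
      rw [zeroRuns, zeroRuns, splitBy_cons_cons_of_rel l this, hg]
      simp [ha, hb]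

theorem zeroRuns_replicate_append (g : ℕ) (l : List ℕ) (hl : ∀ x ∈ l.head?, x ≠ 0) :
    zeroRuns (List.replicate g 0 ++ l) =
      (if g = 0 then [] else [List.replicate g 0]) ++ zeroRuns l := by
  induction g with
  | zero => simp
  | succ g ih =>
    rw [List.replicate_succ, List.cons_append]
    cases g with
    | zero =>
      simp only [List.replicate_zero, List.nil_append, if_neg (Nat.one_ne_zero)]
      cases l with
      | nil => simp [zeroRuns, List.splitBy, List.splitBy.loop]
      | cons b l =>
        have hb : b ≠ 0 := hl b rfl
        have : (((0:ℕ) == 0) == (b == 0)) = false := by simp [hb]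
        rw [zeroRuns, splitBy_cons_cons_of_not_rel l this]
        simp [zeroRuns, List.replicate]
    | succ g' =>
      have hne : List.replicate (g'+1) 0 ++ l = 0 :: (List.replicate g' 0 ++ l) := by
        rw [List.replicate_succ, List.cons_append]
      rcases splitBy_cons_head (fun a b => (a == 0) == (b == 0)) 0
        (List.replicate g' 0 ++ l) with ⟨gr, grs, hg⟩
      rw [hne] at ih ⊢
      rw [zeroRuns, hg] at ih
      rw [zeroRuns, splitBy_cons_cons_of_rel (r := fun a b => (a == 0) == (b == 0))
        (a := 0) (b := 0) _ (by simp), hg]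
      simp only [List.modifyHead_cons, List.filter_cons] at ih ⊢
      simp only [List.head?_cons, show ((some (0:ℕ) == some 0)) = true from rfl, if_pos] at ih ⊢
      rw [if_neg (by simp), List.singleton_append, List.cons.injEq] at ih
      rw [if_neg (by simp), List.singleton_append, ih.1, ih.2]

/-- Interleave gaps of zeros and (nonzero) parts. -/
def inter : List ℕ → List ℕ → List ℕ
  | [], _ => []
  | g :: _, [] => List.replicate g 0
  | g :: gs, a :: as => List.replicate g 0 ++ a :: inter gs as

/-- The nonzero parts of a list. -/
def parts : List ℕ → List ℕ
  | [] => []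
  | 0 :: l => parts l
  | (a+1) :: l => (a+1) :: parts l

/-- The gap sizes (lengths of maximal zero blocks, including empty gaps
before, between and after nonzero entries). -/
def gaps : List ℕ → List ℕ
  | [] => [0]
  | 0 :: l => match gaps l with
    | [] => [1]
    | g :: gs => (g+1) :: gs
  | (_+1) :: l => 0 :: gaps l

theorem gaps_ne_nil (l : List ℕ) : gaps l ≠ [] := by
  induction l with
  | nil => simp [gaps]
  | cons a l ih =>
    match a with
    | 0 => rw [gaps]; rcases h : gaps l with _ | ⟨g, gs⟩ <;> simp
    | a+1 => simp [gaps]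

theorem parts_sum (l : List ℕ) : (parts l).sum = l.sum := by
  induction l with
  | nil => rfl
  | cons a l ih => match a with
    | 0 => simpa [parts]
    | a+1 => simp [parts, ih]

theorem parts_count (l : List ℕ) (i : ℕ) (hi : i ≠ 0) :
    (parts l).count i = l.count i := by
  induction l with
  | nil => rfl
  | cons a l ih => match a with
    | 0 => simp [parts, ih, List.count_cons, Ne.symm hi]
    | a+1 => simp [parts, ih, List.count_cons]

theorem parts_ne_zero (l : List ℕ) : ∀ x ∈ parts l, x ≠ 0 := by
  induction l with
  | nil => simp [parts]
  | cons a l ih => match a with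
    | 0 => simpa [parts]
    | a+1 => simp [parts]; exact ih

theorem parts_length (l : List ℕ) : (parts l).length + l.count 0 = l.length := by
  induction l with
  | nil => rfl
  | cons a l ih => match a with
    | 0 => simp [parts, List.count_cons]; omega
    | a+1 => simp [parts, List.count_cons]; omega

theorem gaps_sum (l : List ℕ) : (gaps l).sum = l.count 0 := by
  induction l with
  | nil => simp [gaps]
  | cons a l ih => match a with
    | 0 =>
      rw [gaps]
      rcases h : gaps l with _ | ⟨g, gs⟩
      · exact absurd h (gaps_ne_nil l)
      · rw [h] at ih; simp only [List.sum_cons, List.count_cons] at ih ⊢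
        simp at ih ⊢; omega
    | a+1 => simp [gaps, List.count_cons, ih]

theorem gaps_length (l : List ℕ) : (gaps l).length = (parts l).length + 1 := by
  induction l with
  | nil => simp [gaps, parts]
  | cons a l ih => match a with
    | 0 =>
      rw [gaps]
      rcases h : gaps l with _ | ⟨g, gs⟩
      · exact absurd h (gaps_ne_nil l)
      · rw [h] at ih; simp at ih ⊢; simp [parts]; omega
    | a+1 => simp [gaps, parts, ih]

theorem inter_gaps_parts (l : List ℕ) : inter (gaps l) (parts l) = l := by
  induction l with
  | nil => simp [gaps, parts, inter]
  | cons a l ih => match a with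
    | 0 =>
      rw [gaps, parts]
      rcases h : gaps l with _ | ⟨g, gs⟩
      · exact absurd h (gaps_ne_nil l)
      · rw [h] at ih
        rcases hp : parts l with _ | ⟨p, ps⟩ <;> rw [hp] at ih <;>
          simp [inter, List.replicate_succ] at ih ⊢ <;> exact ih
    | a+1 => simp [gaps, parts, inter, ih]

theorem gaps_inter (G A : List ℕ) (hG : G.length = A.length + 1) (hA : ∀ x ∈ A, x ≠ 0) :
    gaps (inter G A) = G := by
  induction G generalizing A with
  | nil => simp at hG
  | cons g gs ih =>
    rcases A with _ | ⟨a, as⟩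
    · simp at hG
      rcases hG.symm  -- gs = []
      -- goal : gaps (replicate g 0) = [g]
      clear ih hA
      induction g with
      | zero => simp [inter, gaps]
      | succ g ihg =>
        simp only [inter] at ihg ⊢
        rw [List.replicate_succ, gaps, ihg]
    · have has : ∀ x ∈ as, x ≠ 0 := fun x hx => hA x (List.mem_cons_of_mem _ hx)
      have ha : a ≠ 0 := hA a List.mem_cons_self
      simp at hG
      have core : gaps (a :: inter gs as) = 0 :: gs := by
        obtain ⟨a', rfl⟩ := Nat.exists_eq_succ_of_ne_zero ha
        rw [gaps, ih as hG has]
      clear ih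
      simp only [inter]
      induction g with
      | zero => simpa using core
      | succ g ihg =>
        rw [List.replicate_succ, List.cons_append, gaps, ihg]

theorem parts_inter (G A : List ℕ) (hG : G.length = A.length + 1) (hA : ∀ x ∈ A, x ≠ 0) :
    parts (inter G A) = A := by
  induction G generalizing A with
  | nil => simp at hG
  | cons g gs ih =>
    have hrep : ∀ (n : ℕ) (l : List ℕ), parts (List.replicate n 0 ++ l) = parts l := by
      intro n l
      induction n with
      | zero => simp
      | succ n ihn => rw [List.replicate_succ, List.cons_append, parts, ihn]
    rcases A with _ | ⟨a, as⟩
    · simpa [inter, parts] using hrep g []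
    · have has : ∀ x ∈ as, x ≠ 0 := fun x hx => hA x (List.mem_cons_of_mem _ hx)
      have ha : a ≠ 0 := hA a List.mem_cons_self
      simp at hG
      obtain ⟨a', rfl⟩ := Nat.exists_eq_succ_of_ne_zero ha
      simp only [inter]
      rw [hrep, parts, ih as hG has]

theorem inter_sum (G A : List ℕ) (hG : G.length = A.length + 1) :
    (inter G A).sum = A.sum := by
  induction G generalizing A with
  | nil => simp at hG
  | cons g gs ih =>
    rcases A with _ | ⟨a, as⟩
    · simp [inter]
    · simp at hG
      simp [inter, ih as hG]

theorem inter_count (G A : List ℕ) (i : ℕ) (hi : i ≠ 0) (hG : G.length = A.length + 1) :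
    (inter G A).count i = A.count i := by
  induction G generalizing A with
  | nil => simp at hG
  | cons g gs ih =>
    rcases A with _ | ⟨a, as⟩
    · simp [inter, List.count_replicate, Ne.symm hi]
    · simp at hG
      simp [inter, List.count_replicate, Ne.symm hi, List.count_cons, ih as hG]

theorem inter_count_zero (G A : List ℕ) (hG : G.length = A.length + 1)
    (hA : ∀ x ∈ A, x ≠ 0) : (inter G A).count 0 = G.sum := by
  induction G generalizing A with
  | nil => simp at hG
  | cons g gs ih =>
    rcases A with _ | ⟨a, as⟩
    · simp at hG; simp [hG, inter, List.count_replicate]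
    · have has : ∀ x ∈ as, x ≠ 0 := fun x hx => hA x (List.mem_cons_of_mem _ hx)
      have ha : a ≠ 0 := hA a List.mem_cons_self
      simp at hG
      simp [inter, List.count_replicate, List.count_cons, Ne.symm ha, ha, ih as hG has]

theorem inter_length (G A : List ℕ) (hG : G.length = A.length + 1) :
    (inter G A).length = G.sum + A.length := by
  induction G generalizing A with
  | nil => simp at hG
  | cons g gs ih =>
    rcases A with _ | ⟨a, as⟩
    · simp at hG; simp [hG, inter]
    · simp at hG
      simp [inter, ih as hG]; omega

theorem zeroRuns_inter (G A : List ℕ) (hG : G.length = A.length + 1)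
    (hA : ∀ x ∈ A, x ≠ 0) :
    zeroRuns (inter G A) =
      (G.filter (fun g => g ≠ 0)).map (fun g => List.replicate g 0) := by
  induction G generalizing A with
  | nil => simp at hG
  | cons g gs ih =>
    rcases A with _ | ⟨a, as⟩
    · simp at hG
      rcases hG.symm
      have h2 := zeroRuns_replicate_append g [] (by simp)
      simp only [List.append_nil] at h2
      show zeroRuns (List.replicate g 0) = _
      rw [h2, List.filter_cons]
      have hz : zeroRuns [] = [] := rfl
      by_cases hg : g = 0 <;> simp [hg, hz]
    · have has : ∀ x ∈ as, x ≠ 0 := fun x hx => hA x (List.mem_cons_of_mem _ hx)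
      have ha : a ≠ 0 := hA a List.mem_cons_self
      simp at hG
      simp only [inter]
      rw [zeroRuns_replicate_append g _ (by simpa using ha),
        zeroRuns_cons_of_ne a _ ha, ih as hG has, List.filter_cons]
      by_cases hg : g = 0 <;> simp [hg]

theorem hRunCount_inter (G A : List ℕ) (hG : G.length = A.length + 1)
    (hA : ∀ x ∈ A, x ≠ 0) (i : ℕ) (hi : i ≠ 0) :
    hRunCount (inter G A) i = G.count i := by
  rw [hRunCount, zeroRuns_inter G A hG hA, List.filter_map]
  simp only [Function.comp_def, List.length_replicate]
  rw [List.length_map, List.filter_filter]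
  rw [List.count, List.countP_eq_length_filter]
  congr 1
  apply List.filter_congr
  intro x _
  by_cases hx : x = i
  · subst hx
    have : x ≠ 0 := hi
    simp [this]
  · simp [hx]

/-- Index set: functions `Fin r → ℕ` with entries `≤ n` summing to `n`. -/
def idx (r n : ℕ) : Finset (Fin r → ℕ) :=
  (Fintype.piFinset fun _ => Finset.range (n+1)).filter fun c => (∑ i, c i) = n

theorem coeff_pow_eq_sum_idx (φ : PowerSeries ℚ) (r n : ℕ) :
    PowerSeries.coeff n (φ ^ r) = ∑ c ∈ idx r n, ∏ i, PowerSeries.coeff (c i) φ := by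
  rw [PowerSeries.coeff_pow]
  apply Finset.sum_nbij' (i := fun ℓ => fun i : Fin r => ℓ i.1)
    (j := fun c => Finsupp.onFinset (Finset.range r)
      (fun i => if h : i < r then c ⟨i, h⟩ else 0)
      (fun i hi => by by_contra h; rw [dif_neg (by simpa using h)] at hi; exact hi rfl))
  · intro ℓ hl
    simp only [Finset.mem_finsuppAntidiag] at hl
    have hsum : (∑ i : Fin r, ℓ i.1) = n := by
      rw [Fin.sum_univ_eq_sum_range (fun i => ℓ i), ← hl.1]
    simp only [idx, Finset.mem_filter, Fintype.mem_piFinset, Finset.mem_range]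
    refine ⟨fun i => ?_, hsum⟩
    have : ℓ i.1 ≤ n := by
      rw [← hsum]
      exact Finset.single_le_sum (f := fun i : Fin r => ℓ i.1) (fun _ _ => Nat.zero_le _)
        (Finset.mem_univ i)
    omega
  · intro c hc
    simp only [idx, Finset.mem_filter, Fintype.mem_piFinset, Finset.mem_range] at hc
    simp only [Finset.mem_finsuppAntidiag]
    constructor
    · show (∑ i ∈ Finset.range r, if h : i < r then c ⟨i, h⟩ else 0) = n
      rw [← Fin.sum_univ_eq_sum_range (fun i => if h : i < r then c ⟨i, h⟩ else 0) r, ← hc.2]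
      exact Finset.sum_congr rfl fun i _ => by simp [i.2]
    · exact Finsupp.support_onFinset_subset
  · intro ℓ hl
    simp only [Finset.mem_finsuppAntidiag] at hl
    ext a
    simp only [Finsupp.onFinset_apply]
    by_cases h : a < r
    · simp [h]
    · rw [dif_neg h]
      by_contra hne
      have : a ∈ ℓ.support := Finsupp.mem_support_iff.mpr fun h0 => hne h0.symm
      exact h (Finset.mem_range.mp (hl.2 this))
  · intro c hc
    funext i
    simp [i.2]
  · intro ℓ hl
    rw [← Fin.prod_univ_eq_prod_range (fun i => PowerSeries.coeff (ℓ i) φ)]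

theorem potential_side (s : ℕ → ℚ) (lam k : ℕ) :
    potentialPoly (fun n => (n.factorial : ℚ) * s n) lam k / (k.factorial : ℚ)
      = ∑ g ∈ idx lam k, ∏ i, (if g i = 0 then (1:ℚ) else s (g i)) := by
  rw [potentialPoly]
  have hfun : (fun i : ℕ => if i = 0 then (1:ℚ)
        else ((i.factorial : ℚ) * s i) / (i.factorial : ℚ))
      = fun i => if i = 0 then (1:ℚ) else s i := by
    funext i
    by_cases hi : i = 0
    · simp [hi]
    · rw [if_neg hi, if_neg hi,
        mul_div_cancel_left₀ _ (by exact_mod_cast (Nat.factorial_ne_zero i))]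
  simp only [hfun]
  rw [mul_comm, mul_div_assoc,
    div_self (by exact_mod_cast (Nat.factorial_ne_zero k) : (k.factorial : ℚ) ≠ 0), mul_one,
    coeff_pow_eq_sum_idx]
  exact Finset.sum_congr rfl fun g _ => Finset.prod_congr rfl fun i _ => by
    rw [PowerSeries.coeff_mk]

theorem prod_Icc_one {M : Type*} [CommMonoid M] (f : ℕ → M) (m : ℕ) :
    ∏ x ∈ Finset.Icc 1 m, f x = ∏ i : Fin m, f (i.1 + 1) := by
  rw [Fin.prod_univ_eq_prod_range (fun i => f (i + 1)) m]
  apply Finset.prod_nbij' (i := fun x => x - 1) (j := fun x => x + 1)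
  · intro a ha; simp only [Finset.mem_Icc] at ha; simp only [Finset.mem_range]; omega
  · intro a ha; simp only [Finset.mem_range] at ha; simp only [Finset.mem_Icc]; omega
  · intro a ha; simp only [Finset.mem_Icc] at ha; omega
  · intro a ha; simp only [Finset.mem_range] at ha; omega
  · intro a ha; simp only [Finset.mem_Icc] at ha
    congr 1
    omega

theorem sum_Icc_one {M : Type*} [AddCommMonoid M] (f : ℕ → M) (m : ℕ) :
    ∑ x ∈ Finset.Icc 1 m, f x = ∑ i : Fin m, f (i.1 + 1) := by
  rw [Fin.sum_univ_eq_sum_range (fun i => f (i + 1)) m]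
  apply Finset.sum_nbij' (i := fun x => x - 1) (j := fun x => x + 1)
  · intro a ha; simp only [Finset.mem_Icc] at ha; simp only [Finset.mem_range]; omega
  · intro a ha; simp only [Finset.mem_range] at ha; simp only [Finset.mem_Icc]; omega
  · intro a ha; simp only [Finset.mem_Icc] at ha; omega
  · intro a ha; simp only [Finset.mem_range] at ha; omega
  · intro a ha; simp only [Finset.mem_Icc] at ha
    congr 1
    omega

theorem monomial_eq_C_mul_X_pow (n : ℕ) (a : ℚ) :
    PowerSeries.monomial n a = PowerSeries.C a * (PowerSeries.X) ^ n := by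
  ext m
  rw [PowerSeries.coeff_monomial, PowerSeries.coeff_C_mul, PowerSeries.coeff_X_pow]
  split <;> simp

theorem prod_monomial_pow (S : Finset ℕ) (a : ℕ → ℚ) (c : ℕ → ℕ) :
    ∏ i ∈ S, (PowerSeries.monomial i (a i)) ^ (c i)
      = PowerSeries.monomial (∑ i ∈ S, i * c i) (∏ i ∈ S, a i ^ c i) := by
  simp_rw [monomial_eq_C_mul_X_pow, mul_pow, ← map_pow, ← pow_mul]
  rw [Finset.prod_mul_distrib, ← map_prod, Finset.prod_pow_eq_pow_sum]

/-- The weighted Bell sum equals a power series coefficient. -/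
theorem bell_side (t : ℕ → ℚ) (m r : ℕ) :
    ((r.factorial : ℚ) * partialBell (fun n => (n.factorial : ℚ) * t n) m r) / (m.factorial : ℚ)
      = PowerSeries.coeff m
        ((∑ i ∈ Finset.Icc 1 m, PowerSeries.monomial i (t i)) ^ r) := by
  -- RHS via multinomial theorem
  rw [Finset.sum_pow_eq_sum_piAntidiag, map_sum]
  have hc : ∀ c : ℕ → ℕ,
      PowerSeries.coeff m ((Nat.multinomial (Finset.Icc 1 m) c : ℚ⟦X⟧) *
        ∏ i ∈ Finset.Icc 1 m, (PowerSeries.monomial i (t i)) ^ (c i))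
      = if m = (∑ i ∈ Finset.Icc 1 m, i * c i) then
          (Nat.multinomial (Finset.Icc 1 m) c : ℚ) * ∏ i ∈ Finset.Icc 1 m, t i ^ c i
        else 0 := by
    intro c
    rw [prod_monomial_pow, ← map_natCast (PowerSeries.C (R := ℚ)) (Nat.multinomial (Finset.Icc 1 m) c),
      PowerSeries.coeff_C_mul, PowerSeries.coeff_monomial, mul_ite, mul_zero]
  simp_rw [hc]
  rw [Finset.sum_ite, Finset.sum_const_zero, add_zero]
  -- LHS simplification
  rw [partialBell, Finset.mul_sum, Finset.sum_div]
  have hterm : ∀ c ∈ bellIndex m r,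
      (r.factorial : ℚ) *
          (((m.factorial : ℚ) / ∏ i, ((c i).factorial : ℚ)) *
            ∏ i : Fin m, (((i.1+1).factorial : ℚ) * t (i.1+1) / ((i.1+1).factorial : ℚ)) ^ c i)
          / (m.factorial : ℚ)
      = ((r.factorial : ℚ) / ∏ i, ((c i).factorial : ℚ)) * ∏ i : Fin m, t (i.1+1) ^ c i := by
    intro c _
    have h2 : ∀ i : Fin m, (((i.1+1).factorial : ℚ) * t (i.1+1) / ((i.1+1).factorial : ℚ)) = t (i.1+1) :=
      fun i => mul_div_cancel_left₀ _ (by exact_mod_cast (Nat.factorial_ne_zero (i.1+1)))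
    simp_rw [h2]
    have hm : (m.factorial : ℚ) ≠ 0 := by exact_mod_cast Nat.factorial_ne_zero m
    have hP : (∏ i : Fin m, ((c i).factorial : ℚ)) ≠ 0 :=
      Finset.prod_ne_zero_iff.mpr fun i _ => by exact_mod_cast Nat.factorial_ne_zero (c i)
    field_simp
  rw [Finset.sum_congr rfl hterm]
  -- now a bijection between `bellIndex m r` and the filtered piAntidiag
  apply Finset.sum_nbij'
    (i := fun (c : Fin m → ℕ) (x : ℕ) => if h : 1 ≤ x ∧ x ≤ m then c ⟨x-1, by omega⟩ else 0)
    (j := fun (d : ℕ → ℕ) (i : Fin m) => d (i.1+1))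
  · intro c hcmem
    simp only [bellIndex, Finset.mem_filter, Fintype.mem_piFinset, Finset.mem_range] at hcmem
    obtain ⟨hrange, hsum, hwt⟩ := hcmem
    simp only [Finset.mem_filter, Finset.mem_piAntidiag]
    have key : ∀ (F : ℕ → ℕ → ℕ), (∑ x ∈ Finset.Icc 1 m,
        F x (if h : 1 ≤ x ∧ x ≤ m then c ⟨x-1, by omega⟩ else 0))
        = ∑ i : Fin m, F (i.1+1) (c i) := by
      intro F
      rw [sum_Icc_one (fun x => F x (if h : 1 ≤ x ∧ x ≤ m then c ⟨x-1, by omega⟩ else 0)) m]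
      refine Finset.sum_congr rfl fun i _ => ?_
      have : 1 ≤ i.1 + 1 ∧ i.1 + 1 ≤ m := ⟨by omega, by omega⟩
      rw [dif_pos this, show (⟨i.1 + 1 - 1, by omega⟩ : Fin m) = i from
        Fin.ext (by simp only [Fin.val_mk]; omega)]
    refine ⟨⟨?_, ?_⟩, ?_⟩
    · rw [key (fun x v => v)]; exact hsum
    · intro x hx
      by_contra hnx
      rw [dif_neg (by simpa [Finset.mem_Icc] using hnx)] at hx
      exact hx rfl
    · rw [key (fun x v => x * v)]
      exact hwt.symm
  · intro d hd
    simp only [Finset.mem_filter, Finset.mem_piAntidiag] at hd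
    obtain ⟨⟨hsum, hsupp⟩, hwt⟩ := hd
    simp only [bellIndex, Finset.mem_filter, Fintype.mem_piFinset, Finset.mem_range]
    have hmem : ∀ i : Fin m, (i.1+1) ∈ Finset.Icc 1 m := fun i => by
      simp [Finset.mem_Icc]
    refine ⟨fun i => ?_, ?_, ?_⟩
    · have h1 : (i.1+1) * d (i.1+1) ≤ ∑ x ∈ Finset.Icc 1 m, x * d x :=
        Finset.single_le_sum (f := fun x => x * d x) (fun _ _ => Nat.zero_le _) (hmem i)
      rw [← hwt] at h1
      have : d (i.1+1) ≤ (i.1+1) * d (i.1+1) := Nat.le_mul_of_pos_left _ (by omega)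
      omega
    · rw [← hsum, sum_Icc_one (fun x => d x) m]
    · rw [show (∑ i : Fin m, (i.1 + 1) * (fun i : Fin m => d (i.1+1)) i)
          = ∑ x ∈ Finset.Icc 1 m, x * d x by
        rw [sum_Icc_one (fun x => x * d x) m]]
      exact hwt.symm
  · intro c _
    funext i
    have h : 1 ≤ i.1 + 1 ∧ i.1 + 1 ≤ m := ⟨by omega, by omega⟩
    show (if hh : 1 ≤ i.1 + 1 ∧ i.1 + 1 ≤ m then c ⟨i.1 + 1 - 1, by omega⟩ else 0) = c i
    rw [dif_pos h]
    exact congrArg c (Fin.ext (by simp only [Fin.val_mk]; omega))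
  · intro d hd
    simp only [Finset.mem_filter, Finset.mem_piAntidiag] at hd
    funext x
    by_cases h : 1 ≤ x ∧ x ≤ m
    · rw [dif_pos h]
      show d (x - 1 + 1) = d x
      congr 1
      omega
    · rw [dif_neg h]
      by_contra hne
      have := hd.1.2 x fun h0 => hne h0.symm
      simp [Finset.mem_Icc] at this
      exact h this
  · intro c hcmem
    simp only [bellIndex, Finset.mem_filter, Fintype.mem_piFinset, Finset.mem_range] at hcmem
    obtain ⟨hrange, hsum, hwt⟩ := hcmem
    have hprod : ∀ (F : ℕ → ℕ → ℚ), (∏ x ∈ Finset.Icc 1 m,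
        F x (if h : 1 ≤ x ∧ x ≤ m then c ⟨x-1, by omega⟩ else 0))
        = ∏ i : Fin m, F (i.1+1) (c i) := by
      intro F
      rw [prod_Icc_one (fun x => F x (if h : 1 ≤ x ∧ x ≤ m then c ⟨x-1, by omega⟩ else 0)) m]
      refine Finset.prod_congr rfl fun i _ => ?_
      have : 1 ≤ i.1 + 1 ∧ i.1 + 1 ≤ m := ⟨by omega, by omega⟩
      rw [dif_pos this, show (⟨i.1 + 1 - 1, by omega⟩ : Fin m) = i from
        Fin.ext (by simp only [Fin.val_mk]; omega)]
    have hmult : (Nat.multinomial (Finset.Icc 1 m)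
          (fun x => if h : 1 ≤ x ∧ x ≤ m then c ⟨x-1, by omega⟩ else 0) : ℚ)
        = (r.factorial : ℚ) / ∏ i : Fin m, ((c i).factorial : ℚ) := by
      have hspec := Nat.multinomial_spec (Finset.Icc 1 m)
        (fun x => if h : 1 ≤ x ∧ x ≤ m then c ⟨x-1, by omega⟩ else 0)
      have hsum2 : (∑ x ∈ Finset.Icc 1 m,
          (if h : 1 ≤ x ∧ x ≤ m then c ⟨x-1, by omega⟩ else 0)) = r := by
        rw [sum_Icc_one (fun x => if h : 1 ≤ x ∧ x ≤ m then c ⟨x-1, by omega⟩ else 0) m, ← hsum]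
        refine Finset.sum_congr rfl fun i _ => ?_
        have : 1 ≤ i.1 + 1 ∧ i.1 + 1 ≤ m := ⟨by omega, by omega⟩
        rw [dif_pos this]
        exact congrArg c (Fin.ext (by simp only [Fin.val_mk]; omega))
      rw [hsum2] at hspec
      have hP : (∏ i : Fin m, ((c i).factorial : ℚ)) ≠ 0 :=
        Finset.prod_ne_zero_iff.mpr fun i _ => by exact_mod_cast Nat.factorial_ne_zero (c i)
      have hcast := congrArg (fun n : ℕ => (n : ℚ)) hspec
      push_cast at hcast
      rw [hprod (fun _ v => ((v.factorial : ℚ)))] at hcast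
      rw [eq_div_iff hP, mul_comm]
      exact hcast
    rw [hmult, hprod (fun x v => t x ^ v)]


theorem weight_t (t : ℕ → ℚ) (m : ℕ) (l : List ℕ) (hsum : l.sum = m) :
    ∏ i ∈ Finset.Icc 1 m, t i ^ l.count i = ((parts l).map t).prod := by
  rw [Finset.prod_list_map_count]
  have hsub : (parts l).toFinset ⊆ Finset.Icc 1 m := by
    intro x hx
    rw [List.mem_toFinset] at hx
    have hx0 : x ≠ 0 := parts_ne_zero l x hx
    have hxs : x ≤ (parts l).sum := List.le_sum_of_mem hx
    rw [parts_sum, hsum] at hxs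
    rw [Finset.mem_Icc]; omega
  rw [Finset.prod_subset hsub (fun x _ hnx => by
    rw [List.count_eq_zero_of_not_mem (fun hm => hnx (List.mem_toFinset.mpr hm)), pow_zero])]
  refine Finset.prod_congr rfl fun x hx => ?_
  rw [parts_count l x (by rw [Finset.mem_Icc] at hx; omega)]

theorem weight_s (s : ℕ → ℚ) (k : ℕ) (l : List ℕ) (hcount : l.count 0 = k) :
    ∏ i ∈ Finset.Icc 1 k, s i ^ hRunCount l i
      = ((gaps l).map (fun x => if x = 0 then (1:ℚ) else s x)).prod := by
  have hr : ∀ i : ℕ, i ≠ 0 → hRunCount l i = (gaps l).count i := by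
    intro i hi
    conv_lhs => rw [← inter_gaps_parts l]
    exact hRunCount_inter _ _ (gaps_length l) (parts_ne_zero l) i hi
  rw [Finset.prod_list_map_count]
  have hsub : ((gaps l).toFinset).erase 0 ⊆ Finset.Icc 1 k := by
    intro x hx
    rw [Finset.mem_erase, List.mem_toFinset] at hx
    have hxs : x ≤ (gaps l).sum := List.le_sum_of_mem hx.2
    rw [gaps_sum, hcount] at hxs
    rw [Finset.mem_Icc]
    exact ⟨by omega, hxs⟩
  rw [← Finset.prod_erase ((gaps l).toFinset)
      (f := fun x => (if x = 0 then (1:ℚ) else s x) ^ (gaps l).count x) (a := 0) (by simp),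
    Finset.prod_subset hsub (fun x hx hnx => by
      have hx0 : x ≠ 0 := by rw [Finset.mem_Icc] at hx; omega
      have hni : x ∉ (gaps l).toFinset := fun hmem => hnx (Finset.mem_erase.mpr ⟨hx0, hmem⟩)
      rw [List.count_eq_zero_of_not_mem (fun hm => hni (List.mem_toFinset.mpr hm)), pow_zero])]
  refine Finset.prod_congr rfl fun x hx => ?_
  have hx0 : x ≠ 0 := by rw [Finset.mem_Icc] at hx; omega
  rw [if_neg hx0, hr x hx0]

theorem exists_ofFn {L : List ℕ} {n : ℕ} (h : L.length = n) :
    ∃ c : Fin n → ℕ, List.ofFn c = L := by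
  subst h
  exact ⟨L.get, List.ofFn_get L⟩

theorem mem_image_compSet (m k j : ℕ) (l : List ℕ) :
    l ∈ (compSet m k j).image List.ofFn ↔ l.length = j ∧ l.sum = m ∧ l.count 0 = k := by
  simp only [Finset.mem_image]
  constructor
  · rintro ⟨c, hc, rfl⟩
    simp only [compSet, Finset.mem_filter, Fintype.mem_piFinset, Finset.mem_range] at hc
    exact ⟨by simp, by rw [List.sum_ofFn]; exact hc.2.1, hc.2.2⟩
  · rintro ⟨hlen, hsum, hcount⟩
    obtain ⟨c, rfl⟩ := exists_ofFn hlen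
    refine ⟨c, ?_, rfl⟩
    rw [List.sum_ofFn] at hsum
    simp only [compSet, Finset.mem_filter, Fintype.mem_piFinset, Finset.mem_range]
    refine ⟨fun i => ?_, hsum, hcount⟩
    have hmem : c i ∈ List.ofFn c := List.mem_ofFn.mpr ⟨i, rfl⟩
    have := List.le_sum_of_mem hmem
    rw [List.sum_ofFn, hsum] at this
    omega

theorem mem_image_idx (r n : ℕ) (l : List ℕ) :
    l ∈ (idx r n).image List.ofFn ↔ l.length = r ∧ l.sum = n := by
  simp only [Finset.mem_image]
  constructor
  · rintro ⟨c, hc, rfl⟩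
    simp only [idx, Finset.mem_filter, Fintype.mem_piFinset, Finset.mem_range] at hc
    exact ⟨by simp, by rw [List.sum_ofFn]; exact hc.2⟩
  · rintro ⟨hlen, hsum⟩
    obtain ⟨c, rfl⟩ := exists_ofFn hlen
    refine ⟨c, ?_, rfl⟩
    rw [List.sum_ofFn] at hsum
    simp only [idx, Finset.mem_filter, Fintype.mem_piFinset, Finset.mem_range]
    refine ⟨fun i => ?_, hsum⟩
    have hmem : c i ∈ List.ofFn c := List.mem_ofFn.mpr ⟨i, rfl⟩
    have := List.le_sum_of_mem hmem
    rw [List.sum_ofFn, hsum] at this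
    omega

/-- The finset of positive compositions, as functions. -/
def aset (m r : ℕ) : Finset (Fin r → ℕ) :=
  (Fintype.piFinset fun _ => Finset.Icc 1 m).filter fun c => (∑ i, c i) = m

theorem mem_image_aset (m r : ℕ) (l : List ℕ) :
    l ∈ (aset m r).image List.ofFn ↔ l.length = r ∧ l.sum = m ∧ ∀ x ∈ l, x ≠ 0 := by
  simp only [Finset.mem_image]
  constructor
  · rintro ⟨c, hc, rfl⟩
    simp only [aset, Finset.mem_filter, Fintype.mem_piFinset, Finset.mem_Icc] at hc
    refine ⟨by simp, by rw [List.sum_ofFn]; exact hc.2, fun x hx => ?_⟩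
    obtain ⟨i, rfl⟩ := List.mem_ofFn.mp hx
    have := (hc.1 i).1
    omega
  · rintro ⟨hlen, hsum, hpos⟩
    obtain ⟨c, rfl⟩ := exists_ofFn hlen
    refine ⟨c, ?_, rfl⟩
    rw [List.sum_ofFn] at hsum
    simp only [aset, Finset.mem_filter, Fintype.mem_piFinset, Finset.mem_Icc]
    refine ⟨fun i => ?_, hsum⟩
    have hmem : c i ∈ List.ofFn c := List.mem_ofFn.mpr ⟨i, rfl⟩
    have h1 := List.le_sum_of_mem hmem
    rw [List.sum_ofFn, hsum] at h1
    have h2 := hpos (c i) hmem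
    omega

theorem coeff_Tsum (t : ℕ → ℚ) (m x : ℕ) :
    PowerSeries.coeff x (∑ i ∈ Finset.Icc 1 m, PowerSeries.monomial i (t i))
      = if x ∈ Finset.Icc 1 m then t x else 0 := by
  rw [map_sum]
  simp_rw [PowerSeries.coeff_monomial]
  rw [Finset.sum_ite_eq (Finset.Icc 1 m) x t]

theorem bell_sum (t : ℕ → ℚ) (m r : ℕ) :
    ((r.factorial : ℚ) * partialBell (fun n => (n.factorial : ℚ) * t n) m r) / (m.factorial : ℚ)
      = ∑ L ∈ (aset m r).image List.ofFn, (L.map t).prod := by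
  rw [bell_side, coeff_pow_eq_sum_idx]
  have hstep : ∑ c ∈ idx r m, (∏ i, PowerSeries.coeff (c i)
        (∑ i ∈ Finset.Icc 1 m, PowerSeries.monomial i (t i)))
      = ∑ c ∈ aset m r, ∏ i, t (c i) := by
    have hsub : aset m r ⊆ idx r m := by
      intro c hc
      simp only [aset, Finset.mem_filter, Fintype.mem_piFinset, Finset.mem_Icc] at hc
      simp only [idx, Finset.mem_filter, Fintype.mem_piFinset, Finset.mem_range]
      exact ⟨fun i => by have := (hc.1 i).2; omega, hc.2⟩
    rw [← Finset.sum_subset hsub (fun c hc hnc => ?_)]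
    · refine Finset.sum_congr rfl fun c hc => Finset.prod_congr rfl fun i _ => ?_
      simp only [aset, Finset.mem_filter, Fintype.mem_piFinset] at hc
      rw [coeff_Tsum, if_pos (hc.1 i)]
    · simp only [idx, Finset.mem_filter, Fintype.mem_piFinset, Finset.mem_range] at hc
      simp only [aset, Finset.mem_filter, Fintype.mem_piFinset] at hnc
      have : ∃ i, c i ∉ Finset.Icc 1 m := by
        by_contra hall
        push_neg at hall
        exact hnc ⟨hall, hc.2⟩
      obtain ⟨i, hi⟩ := this
      exact Finset.prod_eq_zero (Finset.mem_univ i) (by rw [coeff_Tsum, if_neg hi])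
  rw [hstep, Finset.sum_image (fun x _ y _ h => List.ofFn_injective h)]
  refine Finset.sum_congr rfl fun c _ => ?_
  rw [List.map_ofFn, List.prod_ofFn]
  rfl

theorem gap_sum (s : ℕ → ℚ) (lam k : ℕ) :
    potentialPoly (fun n => (n.factorial : ℚ) * s n) lam k / (k.factorial : ℚ)
      = ∑ L ∈ (idx lam k).image List.ofFn,
          (L.map (fun x => if x = 0 then (1:ℚ) else s x)).prod := by
  rw [potential_side, Finset.sum_image (fun x _ y _ h => List.ofFn_injective h)]
  refine Finset.sum_congr rfl fun c _ => ?_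
  rw [List.map_ofFn, List.prod_ofFn]
  rfl

end CWS

/-- Theorem 3.2: for compositions of `m` into `j` parts with `k` zero parts,
weighted by `t_i` per nonzero part equal to `i` (one `u`-segment of length `i`
each) and `s_i` per maximal run of `i` consecutive zeros,
`∑_C ∏ t_i^{u_i(C)} ∏ s_i^{h_i(C)}
  = P_k^{(j-k+1)}(1!s₁,2!s₂,…)/k! · (j-k)!·B_{m,j-k}(1!t₁,2!t₂,…)/m!`. -/
theorem composition_weighted_sum (t s : ℕ → ℚ) (m k j : ℕ) (hkj : k ≤ j) :
    ∑ c ∈ compSet m k j,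
        (∏ i ∈ Finset.Icc 1 m, t i ^ (List.ofFn c).count i) *
        (∏ i ∈ Finset.Icc 1 k, s i ^ hRunCount (List.ofFn c) i)
      = potentialPoly (fun n => (n.factorial : ℚ) * s n) (j-k+1) k / (k.factorial : ℚ)
          * (((j-k).factorial : ℚ) * partialBell (fun n => (n.factorial : ℚ) * t n) m (j-k)
              / (m.factorial : ℚ)) := by
  classical
  rw [CWS.gap_sum s (j-k+1) k, CWS.bell_sum t m (j-k)]
  have himg : ∑ l ∈ (compSet m k j).image List.ofFn,
      (∏ i ∈ Finset.Icc 1 m, t i ^ l.count i) * (∏ i ∈ Finset.Icc 1 k, s i ^ hRunCount l i)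
      = ∑ c ∈ compSet m k j,
        (∏ i ∈ Finset.Icc 1 m, t i ^ (List.ofFn c).count i) *
        (∏ i ∈ Finset.Icc 1 k, s i ^ hRunCount (List.ofFn c) i) :=
    Finset.sum_image (fun x _ y _ h => List.ofFn_injective h)
  rw [← himg, Finset.sum_mul_sum, ← Finset.sum_product']
  apply Finset.sum_nbij' (i := fun l => (CWS.gaps l, CWS.parts l))
    (j := fun p => CWS.inter p.1 p.2)
  · intro l hl
    rw [CWS.mem_image_compSet] at hl
    obtain ⟨hlen, hsum, hcnt⟩ := hl
    have hplen := CWS.parts_length l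
    rw [Finset.mem_product]
    dsimp only
    constructor
    · rw [CWS.mem_image_idx]
      refine ⟨?_, ?_⟩
      · rw [CWS.gaps_length l]; omega
      · rw [CWS.gaps_sum l, hcnt]
    · rw [CWS.mem_image_aset]
      refine ⟨by omega, ?_, CWS.parts_ne_zero l⟩
      rw [CWS.parts_sum l]; exact hsum
  · intro p hp
    rw [Finset.mem_product, CWS.mem_image_idx, CWS.mem_image_aset] at hp
    obtain ⟨⟨hGlen, hGsum⟩, hAlen, hAsum, hApos⟩ := hp
    have hG : p.1.length = p.2.length + 1 := by omega
    rw [CWS.mem_image_compSet]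
    refine ⟨?_, ?_, ?_⟩
    · rw [CWS.inter_length p.1 p.2 hG, hGsum, hAlen]; omega
    · rw [CWS.inter_sum p.1 p.2 hG]; exact hAsum
    · rw [CWS.inter_count_zero p.1 p.2 hG hApos]; exact hGsum
  · intro l _
    exact CWS.inter_gaps_parts l
  · intro p hp
    rw [Finset.mem_product, CWS.mem_image_idx, CWS.mem_image_aset] at hp
    obtain ⟨⟨hGlen, hGsum⟩, hAlen, hAsum, hApos⟩ := hp
    have hG : p.1.length = p.2.length + 1 := by omega
    have h1 := CWS.gaps_inter p.1 p.2 hG hApos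
    have h2 := CWS.parts_inter p.1 p.2 hG hApos
    exact Prod.ext h1 h2
  · intro l hl
    rw [CWS.mem_image_compSet] at hl
    obtain ⟨hlen, hsum, hcnt⟩ := hl
    rw [CWS.weight_t t m l hsum, CWS.weight_s s k l hcnt]
    ring
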